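/- Let A be a weighted F-algebra concentrated in non-positive weights, M a tame A-module, and suppose there exists a monomial a = y₀^{i₀}⋯y_h^{i_h} of weight −2k in A = F[y₀,...]/(y₀^{d₁},...) with 0 ≤ i_j < d_{j+1}. If ν ∈ M has weight at most −k and satisfies y_j^{d_{j+1}−i_j} ν = 0 for all 0 ≤ j ≤ h, then ν lies in the image of multiplication by a on M. -/

import Mathlib

open Finset

noncomputable section

/-- The weighted truncated polynomial algebra
`𝒜(d) = F[𝔶₀,𝔶₁,…]/(𝔶₀^{d₁}, 𝔶₁^{d₂}, …)`, where `𝔶ᵢ` is the class of the variable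
`X i` and carries weight `−2·D_i` with `D_i = d₀d₁⋯d_i`. -/
abbrev TruncAlg (F : Type) [Field F] (d : ℕ → ℕ) : Type :=
  MvPolynomial ℕ F ⧸
    Ideal.span (Set.range fun i : ℕ => (MvPolynomial.X i : MvPolynomial ℕ F) ^ d (i + 1))

/-- The generator `𝔶ᵢ` of `𝒜(d)`. -/
def yvar (F : Type) [Field F] (d : ℕ → ℕ) (i : ℕ) : TruncAlg F d :=
  Ideal.Quotient.mk _ (MvPolynomial.X i)

/-- `D_i = d₀·d₁·⋯·d_i`. -/
def Dprod (d : ℕ → ℕ) (i : ℕ) : ℕ := ∏ j ∈ Finset.range (i + 1), d j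

/-- The weight-`n` component of `𝒜(d)`: the `F`-span of (classes of) monomials
`∏ 𝔶ᵢ^{aᵢ}` of total weight `Σᵢ aᵢ·(−2Dᵢ) = n`. -/
def algGrading (F : Type) [Field F] (d : ℕ → ℕ) (n : ℤ) : Submodule F (TruncAlg F d) :=
  Submodule.span F ((fun x => (Ideal.Quotient.mk _ x : TruncAlg F d)) ''
    {x : MvPolynomial ℕ F | ∃ m : ℕ →₀ ℕ,
      x = MvPolynomial.monomial m 1 ∧
      (m.sum fun i a => -(2 * (Dprod d i : ℤ) * (a : ℤ))) = n})


def Tame (F : Type) [Field F] (d : ℕ → ℕ) (M : Type) [AddCommGroup M] [Module F M]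
    [Module (TruncAlg F d) M] (ℳ : ℤ → Submodule F M) : Prop :=
  FiniteDimensional F M ∧
  (∃ e : M ≃ₗ[F] Module.Dual F M,
    (∀ (a : TruncAlg F d) (x z : M), e (a • x) z = e x (a • z)) ∧
    (∀ (n : ℤ) (x : M), x ∈ ℳ n → ∀ (m : ℤ) (z : M), z ∈ ℳ m → m ≠ -n → e x z = 0)) ∧
  (∀ k : ℕ, ∃ (N : ℕ) (wgen : Fin N → ℤ) (xg : Fin N → M),
    (∀ i, (k : ℤ) ≤ wgen i) ∧ (∀ i, xg i ∈ ℳ (wgen i)) ∧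
    (∀ n : ℤ, (k : ℤ) ≤ n →
      ℳ n ≤ ⨆ i : Fin N,
        Submodule.span F {z : M | ∃ a ∈ algGrading F d (n - wgen i), z = a • xg i}) ∧
    (∀ n : ℤ, -(k : ℤ) ≤ n → ∀ a : Fin N → TruncAlg F d,
      (∀ i, a i ∈ algGrading F d (n - wgen i)) → (∑ i, a i • xg i) = 0 → ∀ i, a i = 0))


set_option maxHeartbeats 1000000
set_option synthInstance.maxHeartbeats 400000

namespace Aux15

variable {F : Type} [Field F] {d : ℕ → ℕ}

/-- The quotient map onto the truncated algebra. -/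
def quotMk (F : Type) [Field F] (d : ℕ → ℕ) : MvPolynomial ℕ F →+* TruncAlg F d :=
  Ideal.Quotient.mk _

lemma mk_monomial_mem (m : ℕ →₀ ℕ) :
    quotMk F d (MvPolynomial.monomial m 1) ∈
      algGrading F d (m.sum fun i a => -(2 * (Dprod d i : ℤ) * (a : ℤ))) :=
  Submodule.subset_span ⟨_, ⟨m, rfl, rfl⟩, rfl⟩

lemma algGrading_mul {a b : TruncAlg F d} {m n : ℤ}
    (ha : a ∈ algGrading F d m) (hb : b ∈ algGrading F d n) :
    a * b ∈ algGrading F d (m + n) := by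
  induction ha using Submodule.span_induction with
  | mem x hx =>
    obtain ⟨x₀, ⟨s, rfl, hs⟩, rfl⟩ := hx
    induction hb using Submodule.span_induction with
    | mem y hy =>
      obtain ⟨y₀, ⟨t, rfl, ht⟩, rfl⟩ := hy
      have : (Ideal.Quotient.mk _ (MvPolynomial.monomial s 1) : TruncAlg F d) *
          Ideal.Quotient.mk _ (MvPolynomial.monomial t 1) =
          quotMk F d (MvPolynomial.monomial (s + t) 1) := by
        rw [quotMk, ← map_mul, MvPolynomial.monomial_mul, one_mul]
      rw [this]
      have hw : ((s + t).sum fun i a => -(2 * (Dprod d i : ℤ) * (a : ℤ))) = m + n := by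
        rw [Finsupp.sum_add_index' (fun i => by push_cast; ring)
          (fun i b₁ b₂ => by push_cast; ring), hs, ht]
      rw [← hw]
      exact mk_monomial_mem (s + t)
    | zero => rw [mul_zero]; exact Submodule.zero_mem _
    | add y z _ _ hy hz => rw [mul_add]; exact Submodule.add_mem _ hy hz
    | smul r y _ hy => rw [mul_smul_comm]; exact Submodule.smul_mem _ r hy
  | zero => rw [zero_mul]; exact Submodule.zero_mem _
  | add x y _ _ hx hy => rw [add_mul]; exact Submodule.add_mem _ hx hy
  | smul r x _ hx => rw [smul_mul_assoc]; exact Submodule.smul_mem _ r hx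

lemma prod_yvar (s : Finset ℕ) (e : ℕ → ℕ) :
    (∏ j ∈ s, yvar F d j ^ e j) =
      quotMk F d (MvPolynomial.monomial (∑ j ∈ s, Finsupp.single j (e j)) 1) := by
  have key : ∀ s : Finset ℕ,
      (∏ j ∈ s, MvPolynomial.monomial (Finsupp.single j (e j)) (1 : F)) =
        MvPolynomial.monomial (∑ j ∈ s, Finsupp.single j (e j)) 1 := by
    intro s
    induction s using Finset.cons_induction with
    | empty => simp
    | cons a s ha ih =>
      rw [Finset.prod_cons, Finset.sum_cons, ih, MvPolynomial.monomial_mul, one_mul]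
  rw [← key, map_prod]
  refine Finset.prod_congr rfl fun j _ => ?_
  rw [quotMk, ← MvPolynomial.X_pow_eq_monomial, map_pow]
  rfl


variable {F : Type} [Field F] {d : ℕ → ℕ}

lemma hrange_eq :
    (Set.range fun i : ℕ => (MvPolynomial.X i : MvPolynomial ℕ F) ^ d (i + 1)) =
      (fun s => MvPolynomial.monomial s (1 : F)) ''
        (Set.range fun i : ℕ => Finsupp.single i (d (i + 1))) := by
  rw [← Set.range_comp]
  refine congrArg _ (funext fun i => ?_)
  exact MvPolynomial.X_pow_eq_monomial

lemma ann_lemma (h : ℕ) (idx : ℕ → ℕ) (hidx : ∀ j ≤ h, idx j < d (j + 1)) (b : TruncAlg F d)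
    (hb : quotMk F d (MvPolynomial.monomial
        (∑ j ∈ Finset.range (h + 1), Finsupp.single j (idx j)) 1) * b = 0) :
    b ∈ Ideal.span ((fun j => yvar F d j ^ (d (j + 1) - idx j)) '' Set.Iic h) := by
  have hsurj : Function.Surjective (quotMk F d) := Ideal.Quotient.mk_surjective
  obtain ⟨b₀, rfl⟩ := hsurj b
  set ia : ℕ →₀ ℕ := ∑ j ∈ Finset.range (h + 1), Finsupp.single j (idx j) with hia_def
  rw [← map_mul, quotMk, Ideal.Quotient.eq_zero_iff_mem, hrange_eq,
    MvPolynomial.mem_ideal_span_monomial_image] at hb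
  have hb₀ : b₀ ∈ Ideal.span ((fun s => MvPolynomial.monomial s (1 : F)) ''
      ((Set.range fun i : ℕ => Finsupp.single i (d (i + 1))) ∪
        ((fun j => Finsupp.single j (d (j + 1) - idx j)) '' Set.Iic h))) := by
    rw [MvPolynomial.mem_ideal_span_monomial_image]
    intro m hm
    have hm' : ia + m ∈ (MvPolynomial.monomial ia (1 : F) * b₀).support := by
      rw [MvPolynomial.mem_support_iff, MvPolynomial.coeff_monomial_mul, one_mul]
      exact MvPolynomial.mem_support_iff.mp hm
    obtain ⟨s, ⟨i, rfl⟩, hs⟩ := hb _ hm'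
    rw [Finsupp.single_le_iff] at hs
    have hia : ia i = if i ≤ h then idx i else 0 := by
      simp [hia_def, Finsupp.finset_sum_apply, Finsupp.single_apply,
        Finset.sum_ite_eq' (Finset.range (h + 1)), Nat.lt_succ_iff]
    rw [Finsupp.add_apply] at hs
    by_cases hih : i ≤ h
    · refine ⟨Finsupp.single i (d (i + 1) - idx i), Or.inr ⟨i, hih, rfl⟩, ?_⟩
      rw [Finsupp.single_le_iff]
      have := hidx i hih
      rw [hia, if_pos hih] at hs
      omega
    · refine ⟨Finsupp.single i (d (i + 1)), Or.inl ⟨i, rfl⟩, ?_⟩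
      rw [Finsupp.single_le_iff]
      rw [hia, if_neg hih] at hs
      omega
  rw [Set.image_union, Ideal.span_union, Submodule.mem_sup] at hb₀
  obtain ⟨p, hp, q, hq, rfl⟩ := hb₀
  have hp0 : quotMk F d p = 0 := by
    rw [quotMk, Ideal.Quotient.eq_zero_iff_mem, hrange_eq]
    exact hp
  rw [map_add, hp0, zero_add]
  have key := Ideal.mem_map_of_mem (quotMk F d) hq
  rw [Ideal.map_span, Set.image_image] at key
  have him : ∀ j : ℕ, quotMk F d (MvPolynomial.monomial
      (Finsupp.single j (d (j + 1) - idx j)) 1) = yvar F d j ^ (d (j + 1) - idx j) := by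
    intro j
    rw [quotMk, ← MvPolynomial.X_pow_eq_monomial, map_pow]
    rfl
  rw [show (fun j => yvar F d j ^ (d (j + 1) - idx j)) =
      (fun j => quotMk F d (MvPolynomial.monomial
        (Finsupp.single j (d (j + 1) - idx j)) 1)) from funext fun j => (him j).symm]
  rwa [Set.image_image] at key

lemma mem_range_of_ker {K V : Type} [Field K] [AddCommGroup V] [Module K V]
    (T : V →ₗ[K] V) (e : V ≃ₗ[K] Module.Dual K V)
    (he : ∀ x z, e (T x) z = e x (T z)) (v : V) (hv : ∀ z, T z = 0 → e z v = 0) :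
    v ∈ LinearMap.range T := by
  apply (Subspace.forall_mem_dualAnnihilator_apply_eq_zero_iff (LinearMap.range T) v).mp
  intro φ hφ
  rw [Submodule.mem_dualAnnihilator] at hφ
  have hTz : T (e.symm φ) = 0 := by
    apply e.injective
    rw [map_zero]
    ext x
    calc (e (T (e.symm φ))) x = (e (e.symm φ)) (T x) := he _ _
      _ = φ (T x) := by rw [e.apply_symm_apply]
      _ = 0 := hφ (T x) ⟨x, rfl⟩
  have := hv (e.symm φ) hTz
  rwa [e.apply_symm_apply] at this

end Aux15

theorem statement15 (F : Type) [Field F] (d : ℕ → ℕ)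
    (hd0 : 1 ≤ d 0) (hdi : ∀ i : ℕ, 1 ≤ i → 2 ≤ d i)
    (M : Type) [AddCommGroup M] [Module F M] [Module (TruncAlg F d) M]
    [IsScalarTower F (TruncAlg F d) M]
    (ℳ : ℤ → Submodule F M) [DirectSum.Decomposition ℳ]
    (hgr : ∀ (k n : ℤ) (a : TruncAlg F d) (x : M),
      a ∈ algGrading F d k → x ∈ ℳ n → a • x ∈ ℳ (n + k))
    (htame : Tame F d M ℳ)
    (h : ℕ) (idx : ℕ → ℕ) (hidx : ∀ j ≤ h, idx j < d (j + 1))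
    (k : ℕ) (hk : k = ∑ j ∈ Finset.range (h + 1), Dprod d j * idx j)
    (ν : M) (w : ℤ) (hw : w ≤ -(k : ℤ)) (hν : ν ∈ ℳ w)
    (hkill : ∀ j ≤ h, (yvar F d j) ^ (d (j + 1) - idx j) • ν = 0) :
    ∃ μ : M, (∏ j ∈ Finset.range (h + 1), (yvar F d j) ^ idx j) • μ = ν := by
  classical
  obtain ⟨hfin, ⟨e, hint, hort⟩, hfree⟩ := htame
  set a : TruncAlg F d := ∏ j ∈ Finset.range (h + 1), (yvar F d j) ^ idx j with ha_def
  have hamono : a = Aux15.quotMk F d (MvPolynomial.monomial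
      (∑ j ∈ Finset.range (h + 1), Finsupp.single j (idx j)) 1) :=
    Aux15.prod_yvar _ _
  have hknn : (0 : ℤ) ≤ (k : ℤ) := Int.natCast_nonneg k
  -- the monomial is homogeneous of weight -2k
  have haG : a ∈ algGrading F d (-(2 * (k : ℤ))) := by
    rw [hamono]
    have hwt : ((∑ j ∈ Finset.range (h + 1), Finsupp.single j (idx j)).sum
        fun i a => -(2 * (Dprod d i : ℤ) * (a : ℤ))) = -(2 * (k : ℤ)) := by
      rw [← Finsupp.sum_finset_sum_index (fun i => by push_cast; ring)
        (fun i b₁ b₂ => by push_cast; ring)]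
      have : ∀ j ∈ Finset.range (h + 1),
          ((Finsupp.single j (idx j)).sum fun i a => -(2 * (Dprod d i : ℤ) * (a : ℤ))) =
            -(2 * ((Dprod d j * idx j : ℕ) : ℤ)) := by
        intro j _
        rw [Finsupp.sum_single_index (by push_cast; ring)]
        push_cast
        ring
      rw [Finset.sum_congr rfl this, hk, Finset.sum_neg_distrib, neg_inj]
      push_cast [Finset.mul_sum]
      exact Finset.sum_congr rfl fun j _ => by ring
    rw [← hwt]
    exact Aux15.mk_monomial_mem _
  -- the F-linear multiplication map
  let T : M →ₗ[F] M :=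
    { toFun := fun x => a • x
      map_add' := fun x y => smul_add a x y
      map_smul' := fun r x => (smul_comm r a x).symm }
  suffices hmem : ν ∈ LinearMap.range T by
    obtain ⟨μ, hμ⟩ := hmem
    exact ⟨μ, hμ⟩
  apply Aux15.mem_range_of_ker T e (fun x z => hint a x z)
  intro z hz
  -- decompose z
  set Z := DirectSum.decompose ℳ z with hZ_def
  have hzsum : ∑ n ∈ DFinsupp.support Z, (Z n : M) = z := DirectSum.sum_support_decompose ℳ z
  have hcomp : ∀ n : ℤ, (Z n : M) ∈ ℳ n := fun n => SetLike.coe_mem _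
  -- the (-w)-component of z is killed by a
  have hzero : a • ((Z (-w) : M)) = 0 := by
    have h0 : (0 : M) = ∑ n ∈ DFinsupp.support Z, a • (Z n : M) := by
      rw [← Finset.smul_sum, hzsum]
      exact hz.symm
    have h1 := congrArg
      (fun x => ((DirectSum.decomposeAddEquiv ℳ x) (-w + -(2 * (k : ℤ))) : M)) h0
    simp only [map_zero, DirectSum.zero_apply, ZeroMemClass.coe_zero, map_sum,
      DirectSum.decomposeAddEquiv_apply] at h1
    rw [DFinsupp.finset_sum_apply, AddSubmonoidClass.coe_finset_sum] at h1
    have hterm : ∀ n ∈ DFinsupp.support Z, n ≠ -w →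
        ((DirectSum.decompose ℳ (a • (Z n : M)) (-w + -(2 * (k : ℤ)))) : M) = 0 := by
      intro n _ hn
      exact DirectSum.decompose_of_mem_ne ℳ
        (hgr (-(2 * (k : ℤ))) n a _ haG (hcomp n)) (by omega)
    have hlast : (-w) ∉ DFinsupp.support Z →
        ((DirectSum.decompose ℳ (a • (Z (-w) : M)) (-w + -(2 * (k : ℤ)))) : M) = 0 := by
      intro hmem
      rw [DFinsupp.notMem_support_iff.mp hmem, ZeroMemClass.coe_zero, smul_zero,
        DirectSum.decompose_zero, DirectSum.zero_apply, ZeroMemClass.coe_zero]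
    rw [Finset.sum_eq_single (-w) hterm hlast] at h1
    rw [DirectSum.decompose_of_mem_same ℳ
      (hgr (-(2 * (k : ℤ))) (-w) a _ haG (hcomp (-w)))] at h1
    exact h1.symm
  -- tame presentation at level -w
  set k' : ℕ := (-w).toNat with hk'_def
  have hk'w : (k' : ℤ) = -w := Int.toNat_of_nonneg (by omega)
  obtain ⟨N, wgen, xg, hwgen, hxg, hsurj, hinj⟩ := hfree k'
  set z' : M := (Z (-w) : M) with hz'_def
  have hz'mem : z' ∈ ℳ (-w) := hcomp _
  have hz'sup := hsurj (-w) (le_of_eq hk'w) hz'mem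
  let L : Fin N → TruncAlg F d →ₗ[F] M := fun i =>
    { toFun := fun b => b • xg i
      map_add' := fun b c => add_smul b c (xg i)
      map_smul' := fun r b => smul_assoc r b (xg i) }
  have hspan : ∀ i : Fin N,
      Submodule.span F {t : M | ∃ b ∈ algGrading F d (-w - wgen i), t = b • xg i} =
        Submodule.map (L i) (algGrading F d (-w - wgen i)) := by
    intro i
    have hset : {t : M | ∃ b ∈ algGrading F d (-w - wgen i), t = b • xg i} =
        (L i) '' (algGrading F d (-w - wgen i)) := by
      ext t
      constructor
      · rintro ⟨b, hb, rfl⟩; exact ⟨b, hb, rfl⟩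
      · rintro ⟨b, hb, rfl⟩; exact ⟨b, hb, rfl⟩
    rw [hset, Submodule.span_image, Submodule.span_eq]
  simp only [hspan] at hz'sup
  rw [Submodule.mem_iSup_iff_exists_finsupp] at hz'sup
  obtain ⟨f, hf, hfsum⟩ := hz'sup
  choose b hbG hbL using fun i => Submodule.mem_map.mp (hf i)
  have hzrep : z' = ∑ i : Fin N, b i • xg i := by
    rw [← hfsum, Finsupp.sum_fintype _ _ (fun i => rfl)]
    exact (Finset.sum_congr rfl fun i _ => (hbL i)).symm
  -- injectivity kills the products a * b i
  have hzero2 : ∀ i, a * b i = 0 := by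
    refine hinj (-w + -(2 * (k : ℤ))) (by omega) (fun i => a * b i) (fun i => ?_) ?_
    · have := Aux15.algGrading_mul haG (hbG i)
      have hidx2 : (-(2 * (k : ℤ))) + (-w - wgen i) = (-w + -(2 * (k : ℤ))) - wgen i := by
        ring
      rwa [hidx2] at this
    · simp_rw [mul_smul]
      rw [← Finset.smul_sum, ← hzrep]
      exact hzero
  -- hence each b i is in the annihilator ideal
  have hann : ∀ i, b i ∈
      Ideal.span ((fun j => yvar F d j ^ (d (j + 1) - idx j)) '' Set.Iic h) :=
    fun i => Aux15.ann_lemma h idx hidx (b i) (by rw [← hamono]; exact hzero2 i)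
  -- pairing with ν vanishes on that ideal's action
  have hpair : ∀ r : TruncAlg F d,
      r ∈ Ideal.span ((fun j => yvar F d j ^ (d (j + 1) - idx j)) '' Set.Iic h) →
      ∀ x : M, e (r • x) ν = 0 := by
    intro r hr
    induction hr using Submodule.span_induction with
    | mem c hc =>
      obtain ⟨j, hj, rfl⟩ := hc
      intro x
      rw [hint, hkill j hj]
      exact map_zero (e x)
    | zero =>
      intro x
      rw [show (0 : TruncAlg F d) • x = 0 from zero_smul (TruncAlg F d) x, map_zero]
      rfl
    | add c c' _ _ hc hc' =>
      intro x
      rw [add_smul, map_add, LinearMap.add_apply, hc x, hc' x, add_zero]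
    | smul r' c _ hc =>
      intro x
      rw [smul_eq_mul, mul_comm, mul_smul]
      exact hc (r' • x)
  have hfinal : e z' ν = 0 := by
    rw [hzrep, map_sum, LinearMap.sum_apply]
    exact Finset.sum_eq_zero fun i _ => hpair (b i) (hann i) (xg i)
  calc e z ν = ∑ n ∈ DFinsupp.support Z, e (Z n : M) ν := by
        rw [← hzsum, map_sum, LinearMap.sum_apply]
    _ = 0 := by
        refine Finset.sum_eq_zero fun n _ => ?_
        by_cases hn : n = -w
        · rw [hn]; exact hfinal
        · exact hort n (Z n : M) (hcomp n) w ν hν (by omega)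

end
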